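/- In the simple kriging setup, the kriging weights of the second stage satisfy the update formulae W₁ = W₁₀ - Σ₂₀ᵀ Σ₂⁻¹ W₁₂ and W₂ = Σ₂₀ᵀ Σ₂⁻¹, where W₁₂ = C₁₂ᵀ C₁⁻¹, W₁₀ = C₁₀ᵀ C₁⁻¹, Σ₂ = C₂ - C₁₂ᵀ C₁⁻¹ C₁₂, Σ₂₀ = C₂₀ - C₁₂ᵀ C₁⁻¹ C₁₀. Explicitly, (W₁ W₂) equals (C₁₀ᵀ C₂₀ᵀ) times the inverse of the full block covariance matrix [[C₁, C₁₂],[C₁₂ᵀ, C₂]]. -/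

import Mathlib

open Matrix

theorem simple_kriging_weight_update {k l m : ℕ}
    (C₁ : Matrix (Fin k) (Fin k) ℝ) (C₂ : Matrix (Fin l) (Fin l) ℝ)
    (C₁₂ : Matrix (Fin k) (Fin l) ℝ) (C₁₀ : Matrix (Fin k) (Fin m) ℝ)
    (C₂₀ : Matrix (Fin l) (Fin m) ℝ)
    (hC₁ : C₁.PosDef)
    (hPD : (Matrix.fromBlocks C₁ C₁₂ C₁₂ᵀ C₂).PosDef) :
    let W₁₂ := C₁₂ᵀ * C₁⁻¹
    let W₁₀ := C₁₀ᵀ * C₁⁻¹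
    let Sig₂ := C₂ - C₁₂ᵀ * C₁⁻¹ * C₁₂
    let Sig₂₀ := C₂₀ - C₁₂ᵀ * C₁⁻¹ * C₁₀
    let W₂ := Sig₂₀ᵀ * Sig₂⁻¹
    let W₁ := W₁₀ - W₂ * W₁₂
    Matrix.fromCols W₁ W₂ =
      Matrix.fromCols C₁₀ᵀ C₂₀ᵀ * (Matrix.fromBlocks C₁ C₁₂ C₁₂ᵀ C₂)⁻¹ := by
  intro W₁₂ W₁₀ Sig₂ Sig₂₀ W₂ W₁
  haveI hInvC₁ : Invertible C₁ := hC₁.isUnit.invertible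
  haveI hInvB : Invertible (Matrix.fromBlocks C₁ C₁₂ C₁₂ᵀ C₂) := hPD.isUnit.invertible
  haveI hInvS : Invertible (C₂ - C₁₂ᵀ * ⅟C₁ * C₁₂) :=
    Matrix.invertibleOfFromBlocks₁₁Invertible C₁ C₁₂ C₁₂ᵀ C₂
  have hCinv : ⅟C₁ = C₁⁻¹ := invOf_eq_nonsing_inv C₁
  have hS : (C₂ - C₁₂ᵀ * ⅟C₁ * C₁₂) = Sig₂ := by rw [hCinv]
  haveI hInvS' : Invertible Sig₂ := hS ▸ hInvS
  have hSinv : ⅟(C₂ - C₁₂ᵀ * ⅟C₁ * C₁₂) = Sig₂⁻¹ := by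
    rw [invOf_eq_nonsing_inv, hS]
  have hC₁symm : C₁⁻¹ᵀ = C₁⁻¹ := by
    rw [Matrix.transpose_nonsing_inv]
    congr 1
    simpa using hC₁.1.eq
  have hBinv : (Matrix.fromBlocks C₁ C₁₂ C₁₂ᵀ C₂)⁻¹ =
      Matrix.fromBlocks (C₁⁻¹ + C₁⁻¹ * C₁₂ * Sig₂⁻¹ * C₁₂ᵀ * C₁⁻¹)
        (-(C₁⁻¹ * C₁₂ * Sig₂⁻¹)) (-(Sig₂⁻¹ * C₁₂ᵀ * C₁⁻¹)) (Sig₂⁻¹) := by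
    rw [← invOf_eq_nonsing_inv, Matrix.invOf_fromBlocks₁₁_eq, hSinv, hCinv]
  rw [hBinv, Matrix.fromCols_mul_fromBlocks]
  have hSigT : Sig₂₀ᵀ = C₂₀ᵀ - C₁₀ᵀ * C₁⁻¹ * C₁₂ := by
    show (C₂₀ - C₁₂ᵀ * C₁⁻¹ * C₁₀)ᵀ = _
    simp [Matrix.transpose_sub, Matrix.transpose_mul, hC₁symm, Matrix.mul_assoc]
  have h1 : W₁ = C₁₀ᵀ * (C₁⁻¹ + C₁⁻¹ * C₁₂ * Sig₂⁻¹ * C₁₂ᵀ * C₁⁻¹) +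
      C₂₀ᵀ * -(Sig₂⁻¹ * C₁₂ᵀ * C₁⁻¹) := by
    show C₁₀ᵀ * C₁⁻¹ - Sig₂₀ᵀ * Sig₂⁻¹ * (C₁₂ᵀ * C₁⁻¹) = _
    rw [hSigT]
    simp only [Matrix.sub_mul, Matrix.mul_sub, Matrix.add_mul, Matrix.mul_add,
      Matrix.mul_neg, Matrix.neg_mul, Matrix.mul_assoc]
    abel
  have h2 : W₂ = C₁₀ᵀ * -(C₁⁻¹ * C₁₂ * Sig₂⁻¹) + C₂₀ᵀ * Sig₂⁻¹ := by
    show Sig₂₀ᵀ * Sig₂⁻¹ = _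
    rw [hSigT]
    simp only [Matrix.sub_mul, Matrix.mul_sub, Matrix.add_mul, Matrix.mul_add,
      Matrix.mul_neg, Matrix.neg_mul, Matrix.mul_assoc]
    abel
  rw [h1, h2]
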